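/- Distance decrease under the Aiming condition: let f be (H0,H1)-smooth and satisfy the Aiming condition with constant θ > 0 around the set S of global minimizers. Then GD iterates w_{k+1} = w_k − η_k∇f(w_k) with η_k = θ/(10H0 + 20H1(f(w_k)−f*)) satisfy dist(w_{k+1}, S)² ≤ dist(w_k, S)² − η_k θ (f(w_k) − f*). In particular dist(w_k, S) is nonincreasing. -/

import Mathlib

open scoped RealInnerProductSpace

/-- Taylor-type upper bound from a second-derivative upper bound. -/
lemma taylor_upper_aux {φ φ' φ'' : ℝ → ℝ} {M b : ℝ} (hb : 0 ≤ b)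
    (h1 : ∀ t ∈ Set.Icc 0 b, HasDerivAt φ (φ' t) t)
    (h2 : ∀ t ∈ Set.Icc 0 b, HasDerivAt φ' (φ'' t) t)
    (hM : ∀ t ∈ Set.Icc 0 b, φ'' t ≤ M) :
    φ b ≤ φ 0 + φ' 0 * b + M * b ^ 2 / 2 := by
  have key1 : ∀ t ∈ Set.Icc 0 b, φ' t ≤ φ' 0 + M * t := by
    intro t ht
    have hmono : MonotoneOn (fun t => φ' 0 + M * t - φ' t) (Set.Icc 0 b) := by
      apply monotoneOn_of_deriv_nonneg (convex_Icc 0 b)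
      · apply ContinuousOn.sub (by fun_prop)
        exact fun s hs => ((h2 s hs).continuousAt).continuousWithinAt
      · intro s hs
        have hs' : s ∈ Set.Icc 0 b := Set.mem_of_mem_of_subset hs
          (by rw [interior_Icc]; exact Set.Ioo_subset_Icc_self)
        exact (((hasDerivAt_const s (φ' 0)).add ((hasDerivAt_id s).const_mul M)).sub
          (h2 s hs')).differentiableAt.differentiableWithinAt
      · intro s hs
        have hs' : s ∈ Set.Icc 0 b := Set.mem_of_mem_of_subset
          (by rw [interior_Icc] at hs; exact hs) Set.Ioo_subset_Icc_self
        have hd : HasDerivAt (fun t => φ' 0 + M * t - φ' t) (M - φ'' s) s := by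
          have := ((hasDerivAt_const s (φ' 0)).add ((hasDerivAt_id s).const_mul M)).sub (h2 s hs')
          exact this.congr_deriv (by ring)
        rw [hd.deriv]
        linarith [hM s hs']
    have h0 : (0:ℝ) ∈ Set.Icc 0 b := Set.left_mem_Icc.mpr hb
    have := hmono h0 ht ht.1
    simp at this
    linarith
  have hmono2 : MonotoneOn (fun t => φ 0 + φ' 0 * t + M * t ^ 2 / 2 - φ t) (Set.Icc 0 b) := by
    apply monotoneOn_of_deriv_nonneg (convex_Icc 0 b)
    · apply ContinuousOn.sub (by fun_prop)
      exact fun s hs => ((h1 s hs).continuousAt).continuousWithinAt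
    · intro s hs
      have hs' : s ∈ Set.Icc 0 b := Set.mem_of_mem_of_subset hs
        (by rw [interior_Icc]; exact Set.Ioo_subset_Icc_self)
      apply DifferentiableAt.differentiableWithinAt
      apply DifferentiableAt.sub _ (h1 s hs').differentiableAt
      fun_prop
    · intro s hs
      have hs' : s ∈ Set.Icc 0 b := Set.mem_of_mem_of_subset
        (by rw [interior_Icc] at hs; exact hs) Set.Ioo_subset_Icc_self
      have hd : HasDerivAt (fun t => φ 0 + φ' 0 * t + M * t ^ 2 / 2 - φ t)
          (φ' 0 + M * s - φ' s) s := by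
        have hpoly : HasDerivAt (fun t : ℝ => φ 0 + φ' 0 * t + M * t ^ 2 / 2)
            (φ' 0 + M * s) s := by
          have : HasDerivAt (fun t : ℝ => φ 0 + φ' 0 * t + M * t ^ 2 / 2)
              (0 + (φ' 0 * 1) + M * (2 * s ^ 1) / 2) s := by
            exact (((hasDerivAt_const s (φ 0)).add
              ((hasDerivAt_id s).const_mul (φ' 0))).add
              (((hasDerivAt_pow 2 s).const_mul M).div_const 2))
          convert this using 1
          ring
        exact hpoly.sub (h1 s hs')
      rw [hd.deriv]
      linarith [key1 s hs']
  have h0 : (0:ℝ) ∈ Set.Icc 0 b := Set.left_mem_Icc.mpr hb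
  have hbmem : b ∈ Set.Icc 0 b := Set.right_mem_Icc.mpr hb
  have := hmono2 h0 hbmem hb
  simp at this
  linarith

section
variable {d : ℕ}
local notation "E" => EuclideanSpace ℝ (Fin d)

lemma grad_inner (f : E → ℝ) (x u : E) : ⟪gradient f x, u⟫ = fderiv ℝ f x u := by
  rw [gradient, InnerProductSpace.toDual_symm_apply]

set_option maxHeartbeats 1000000 in
lemma grad_sq_le (f : E → ℝ) (H0 H1 fstar : ℝ) (hH0 : 0 < H0) (hH1 : 0 < H1)
    (hf : ContDiff ℝ 2 f) (hlb : ∀ z, fstar ≤ f z)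
    (hs : ∀ z, ‖iteratedFDeriv ℝ 2 f z‖ ≤ H0 + H1 * (f z - fstar))
    (w : E) :
    ‖gradient f w‖ ^ 2 ≤ 2 * (H0 + 3 * H1 * (f w - fstar)) * (f w - fstar) := by
  set Δ := f w - fstar with hΔdef
  have hΔ : 0 ≤ Δ := sub_nonneg.mpr (hlb w)
  rcases eq_or_lt_of_le hΔ with hΔ0 | hΔpos
  · -- f w = fstar : w is a global minimum, gradient is zero
    have hmin : IsLocalMin f w := Filter.Eventually.of_forall fun x => by
      have hfw : f w = fstar := sub_eq_zero.mp hΔ0.symm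
      rw [hfw]; exact hlb x
    have : fderiv ℝ f w = 0 := hmin.fderiv_eq_zero
    have hg0 : gradient f w = 0 := by rw [gradient, this, map_zero]
    rw [hg0]
    simp
    positivity
  · by_cases hg0 : gradient f w = 0
    · rw [hg0]; simp; positivity
    set g := gradient f w with hgdef
    have hgn : 0 < ‖g‖ := norm_pos_iff.mpr hg0
    set v : E := -(‖g‖⁻¹ • g) with hvdef
    have hv1 : ‖v‖ = 1 := by
      rw [hvdef, norm_neg, norm_smul, norm_inv, norm_norm]
      field_simp
    set c : ℝ → E := fun t => w + t • v with hcdef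
    have hc0 : c 0 = w := by simp [hcdef]
    set ψ : ℝ → ℝ := fun t => f (c t) - fstar with hψdef
    have hψnn : ∀ t, 0 ≤ ψ t := fun t => sub_nonneg.mpr (hlb (c t))
    have hψ0 : ψ 0 = Δ := by simp [hψdef, hc0, hΔdef]
    have hline : ∀ t, HasDerivAt c v t := by
      intro t
      have : HasDerivAt (fun t : ℝ => t • v) ((1:ℝ) • v) t :=
        (hasDerivAt_id t).smul_const v
      simpa [hcdef] using this.const_add w
    have hdiff : Differentiable ℝ f := hf.differentiable (by norm_num)
    set φ' : ℝ → ℝ := fun t => fderiv ℝ f (c t) v with hφ'def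
    set φ'' : ℝ → ℝ := fun t => fderiv ℝ (fderiv ℝ f) (c t) v v with hφ''def
    have h1 : ∀ t, HasDerivAt (fun t => f (c t)) (φ' t) t := fun t =>
      (hdiff (c t)).hasFDerivAt.comp_hasDerivAt t (hline t)
    have h1' : ∀ t, HasDerivAt ψ (φ' t) t := fun t => (h1 t).sub_const fstar
    have hF : Differentiable ℝ (fderiv ℝ f) :=
      (hf.fderiv_right (m := 1) (by norm_num)).differentiable one_ne_zero
    have h2 : ∀ t, HasDerivAt φ' (φ'' t) t := by
      intro t
      have hc : HasDerivAt (fun t => fderiv ℝ f (c t)) (fderiv ℝ (fderiv ℝ f) (c t) v) t :=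
        (hF (c t)).hasFDerivAt.comp_hasDerivAt t (hline t)
      have := hc.clm_apply (hasDerivAt_const t v)
      simpa using this
    have hbound : ∀ t, |φ'' t| ≤ H0 + H1 * ψ t := by
      intro t
      have heq : φ'' t = iteratedFDeriv ℝ 2 f (c t) ![v, v] := by
        rw [iteratedFDeriv_two_apply]
        simp [hφ''def]
      have hle : ‖iteratedFDeriv ℝ 2 f (c t) ![v, v]‖ ≤ ‖iteratedFDeriv ℝ 2 f (c t)‖ := by
        have := (iteratedFDeriv ℝ 2 f (c t)).le_opNorm ![v, v]
        simpa [Fin.prod_univ_two, hv1] using this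
      calc |φ'' t| = ‖iteratedFDeriv ℝ 2 f (c t) ![v, v]‖ := by rw [heq]; rfl
        _ ≤ ‖iteratedFDeriv ℝ 2 f (c t)‖ := hle
        _ ≤ H0 + H1 * (f (c t) - fstar) := hs (c t)
        _ = H0 + H1 * ψ t := rfl
    have hφ'0 : φ' 0 = -‖g‖ := by
      rw [hφ'def]
      simp only [hc0]
      rw [← grad_inner, hvdef]
      rw [inner_neg_right, real_inner_smul_right, real_inner_self_eq_norm_sq]
      field_simp
      ring
    have hψcont : Continuous ψ := by
      apply Continuous.sub _ continuous_const
      exact hf.continuous.comp (continuous_const.add (continuous_id.smul continuous_const))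
    clear_value Δ g v c ψ φ' φ''
    set M : ℝ := H0 + 3 * H1 * Δ with hMdef
    clear_value M
    have hMpos : 0 < M := by rw [hMdef]; positivity
    set tmin : ℝ := ‖g‖ / M with htmindef
    clear_value tmin
    have htminpos : 0 < tmin := by rw [htmindef]; exact div_pos hgn hMpos
    -- Key claim: ψ stays below 3Δ on [0, tmin]
    have key : ∀ t ∈ Set.Icc (0:ℝ) tmin, ψ t ≤ 3 * Δ := by
      by_contra hcon
      push_neg at hcon
      obtain ⟨t₀, ht₀mem, ht₀⟩ := hcon
      set A : Set ℝ := Set.Icc 0 tmin ∩ ψ ⁻¹' Set.Ici (3 * Δ) with hAdef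
      have hAne : A.Nonempty := ⟨t₀, ht₀mem, le_of_lt ht₀⟩
      have hAclosed : IsClosed A := isClosed_Icc.inter (isClosed_Ici.preimage hψcont)
      have hAbdd : BddBelow A := ⟨0, fun x hx => hx.1.1⟩
      set t₁ : ℝ := sInf A with ht₁def
      have ht₁A : t₁ ∈ A := hAclosed.csInf_mem hAne hAbdd
      have ht₁nn : 0 ≤ t₁ := ht₁A.1.1
      have ht₁ne : t₁ ≠ 0 := by
        intro h
        have := ht₁A.2
        rw [h] at this
        simp only [Set.mem_preimage, Set.mem_Ici, hψ0] at this
        linarith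
      have ht₁pos : 0 < t₁ := lt_of_le_of_ne ht₁nn (Ne.symm ht₁ne)
      have hlt : ∀ t ∈ Set.Ico (0:ℝ) t₁, ψ t < 3 * Δ := by
        intro t ht
        by_contra hge
        push_neg at hge
        have : t ∈ A := ⟨⟨ht.1, le_trans (le_of_lt ht.2) ht₁A.1.2⟩, hge⟩
        exact absurd (csInf_le hAbdd this) (not_le.mpr ht.2)
      have ht₁up : ψ t₁ ≤ 3 * Δ := by
        have hne : Filter.NeBot (nhdsWithin t₁ (Set.Ico 0 t₁)) := by
          apply mem_closure_iff_nhdsWithin_neBot.mp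
          rw [closure_Ico (ne_of_lt ht₁pos)]
          exact Set.right_mem_Icc.mpr ht₁nn
        refine le_of_tendsto (hψcont.continuousWithinAt (s := Set.Ico 0 t₁) (x := t₁)) ?_
        filter_upwards [self_mem_nhdsWithin] with s hsmem
        exact le_of_lt (hlt s hsmem)
      have hupper : ∀ t ∈ Set.Icc (0:ℝ) t₁, ψ t ≤ 3 * Δ := by
        intro t ht
        rcases lt_or_eq_of_le ht.2 with h | h
        · exact le_of_lt (hlt t ⟨ht.1, h⟩)
        · rw [h]; exact ht₁up
      -- now Taylor on [0, t₁]
      have htay := taylor_upper_aux (M := M) (le_of_lt ht₁pos)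
        (fun t _ => h1' t) (fun t _ => h2 t)
        (fun t ht => le_trans (le_of_abs_le (hbound t))
          (by have h := hupper t ht; rw [hMdef]
              nlinarith [mul_le_mul_of_nonneg_left h (le_of_lt hH1)]))
      rw [hψ0, hφ'0] at htay
      have ht₁le : t₁ ≤ tmin := ht₁A.1.2
      have hMt₁ : M * t₁ ≤ ‖g‖ := by
        rw [htmindef] at ht₁le
        calc M * t₁ ≤ M * (‖g‖ / M) := by nlinarith
          _ = ‖g‖ := by rw [mul_comm]; exact div_mul_cancel₀ _ (ne_of_gt hMpos)
      have hquad : -‖g‖ * t₁ + M * t₁ ^ 2 / 2 ≤ 0 := by nlinarith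
      have hψt₁ : ψ t₁ ≤ Δ := by linarith
      have : (3:ℝ) * Δ ≤ ψ t₁ := ht₁A.2
      linarith
    -- Taylor on [0, tmin]
    have htay := taylor_upper_aux (M := M) (le_of_lt htminpos)
      (fun t _ => h1' t) (fun t _ => h2 t)
      (fun t ht => le_trans (le_of_abs_le (hbound t))
        (by have h := key t ht; rw [hMdef]
            nlinarith [mul_le_mul_of_nonneg_left h (le_of_lt hH1)]))
    rw [hψ0, hφ'0] at htay
    have hψnn' := hψnn tmin
    have htm : tmin = ‖g‖ / M := htmindef
    have hMne : M ≠ 0 := ne_of_gt hMpos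
    have : 0 ≤ Δ - ‖g‖ ^ 2 / M + ‖g‖ ^ 2 / M / 2 := by
      have h1 : -‖g‖ * tmin = -(‖g‖ ^ 2 / M) := by rw [htm]; ring
      have h2 : M * tmin ^ 2 / 2 = ‖g‖ ^ 2 / M / 2 := by rw [htm]; field_simp
      linarith [htay, h1, h2]
    have : ‖g‖ ^ 2 / M ≤ 2 * Δ := by linarith
    calc ‖g‖ ^ 2 = (‖g‖ ^ 2 / M) * M := by field_simp
      _ ≤ 2 * Δ * M := by nlinarith
      _ = 2 * M * Δ := by ring

set_option maxHeartbeats 1000000 in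
/-- Distance decrease under the Aiming condition for GD with the adaptive warm-up step. -/
theorem stmt_11 {d : ℕ} (f : EuclideanSpace ℝ (Fin d) → ℝ)
    (H0 H1 fstar θ : ℝ) (hH0 : 0 < H0) (hH1 : 0 < H1) (hθ : 0 < θ)
    (hf : ContDiff ℝ 2 f) (hfstar : IsGLB (Set.range f) fstar)
    (S : Set (EuclideanSpace ℝ (Fin d))) (hSdef : S = {z | f z = fstar})
    (hSne : S.Nonempty)
    (π : EuclideanSpace ℝ (Fin d) → EuclideanSpace ℝ (Fin d))
    (hπ : ∀ z, π z ∈ S ∧ ‖z - π z‖ = Metric.infDist z S)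
    (hs : ∀ z, ‖iteratedFDeriv ℝ 2 f z‖ ≤ H0 + H1 * (f z - fstar))
    (haim : ∀ z, θ * (f z - fstar) ≤ ⟪gradient f z, z - π z⟫)
    (w : ℕ → EuclideanSpace ℝ (Fin d)) (η : ℕ → ℝ)
    (hη : ∀ k, η k = θ / (10 * H0 + 20 * H1 * (f (w k) - fstar)))
    (hstep : ∀ k, w (k + 1) = w k - η k • gradient f (w k)) :
    (∀ k, (Metric.infDist (w (k + 1)) S) ^ 2 ≤
        (Metric.infDist (w k) S) ^ 2 - η k * θ * (f (w k) - fstar)) ∧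
    (∀ k, Metric.infDist (w (k + 1)) S ≤ Metric.infDist (w k) S) := by
  have hlb : ∀ z, fstar ≤ f z := fun z => hfstar.1 (Set.mem_range_self z)
  have hmain : ∀ k, (Metric.infDist (w (k + 1)) S) ^ 2 ≤
      (Metric.infDist (w k) S) ^ 2 - η k * θ * (f (w k) - fstar) := by
    intro k
    have hΔ : 0 ≤ f (w k) - fstar := sub_nonneg.mpr (hlb (w k))
    have hgsq : ‖gradient f (w k)‖ ^ 2
        ≤ 2 * (H0 + 3 * H1 * (f (w k) - fstar)) * (f (w k) - fstar) :=
      grad_sq_le f H0 H1 fstar hH0 hH1 hf hlb hs (w k)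
    have hH1Δ : 0 ≤ H1 * (f (w k) - fstar) := mul_nonneg (le_of_lt hH1) hΔ
    have hDpos : 0 < 10 * H0 + 20 * H1 * (f (w k) - fstar) := by nlinarith
    have hηD : η k * (10 * H0 + 20 * H1 * (f (w k) - fstar)) = θ := by
      rw [hη k]; field_simp
    have hηpos : 0 < η k := by rw [hη k]; exact div_pos hθ hDpos
    have hg2D : ‖gradient f (w k)‖ ^ 2
        ≤ (10 * H0 + 20 * H1 * (f (w k) - fstar)) * (f (w k) - fstar) := by
      nlinarith [mul_nonneg (mul_nonneg (le_of_lt hH1) hΔ) hΔ,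
        mul_nonneg (mul_nonneg (le_of_lt hH0) hΔ) hΔ, mul_nonneg (le_of_lt hH0) hΔ]
    have hp : π (w k) ∈ S := (hπ (w k)).1
    have hd : ‖w k - π (w k)‖ = Metric.infDist (w k) S := (hπ (w k)).2
    have hstep' : w (k + 1) - π (w k) = (w k - π (w k)) - η k • gradient f (w k) := by
      rw [hstep k]; abel
    have hnormsq : ‖w (k + 1) - π (w k)‖ ^ 2
        = ‖w k - π (w k)‖ ^ 2 - 2 * ⟪w k - π (w k), η k • gradient f (w k)⟫
          + ‖η k • gradient f (w k)‖ ^ 2 := by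
      rw [hstep']
      exact norm_sub_sq_real (w k - π (w k)) (η k • gradient f (w k))
    have haim' : θ * (f (w k) - fstar) ≤ ⟪gradient f (w k), w k - π (w k)⟫ := haim (w k)
    have hinner : ⟪w k - π (w k), η k • gradient f (w k)⟫
        = η k * ⟪gradient f (w k), w k - π (w k)⟫ := by
      rw [real_inner_smul_right, real_inner_comm]
    have hsmulsq : ‖η k • gradient f (w k)‖ ^ 2 = η k ^ 2 * ‖gradient f (w k)‖ ^ 2 := by
      rw [norm_smul, Real.norm_eq_abs, mul_pow, sq_abs]
    have hterm2 : ‖η k • gradient f (w k)‖ ^ 2 ≤ η k * θ * (f (w k) - fstar) := by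
      rw [hsmulsq]
      calc η k ^ 2 * ‖gradient f (w k)‖ ^ 2
          ≤ η k ^ 2 * ((10 * H0 + 20 * H1 * (f (w k) - fstar)) * (f (w k) - fstar)) :=
            mul_le_mul_of_nonneg_left hg2D (by positivity)
        _ = η k * (η k * (10 * H0 + 20 * H1 * (f (w k) - fstar))) * (f (w k) - fstar) := by
            ring
        _ = η k * θ * (f (w k) - fstar) := by rw [hηD]
    have hterm1 : η k * θ * (f (w k) - fstar)
        ≤ η k * ⟪gradient f (w k), w k - π (w k)⟫ := by
      have h := mul_le_mul_of_nonneg_left haim' (le_of_lt hηpos)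
      calc η k * θ * (f (w k) - fstar) = η k * (θ * (f (w k) - fstar)) := by ring
        _ ≤ η k * ⟪gradient f (w k), w k - π (w k)⟫ := h
    have hle1 : Metric.infDist (w (k + 1)) S ≤ ‖w (k + 1) - π (w k)‖ := by
      rw [← dist_eq_norm]
      exact Metric.infDist_le_dist_of_mem hp
    have hle2 : (Metric.infDist (w (k + 1)) S) ^ 2 ≤ ‖w (k + 1) - π (w k)‖ ^ 2 :=
      pow_le_pow_left₀ Metric.infDist_nonneg hle1 2
    rw [hnormsq, hinner, hd] at hle2
    linarith
  refine ⟨hmain, fun k => ?_⟩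
  have h1 := hmain k
  have hΔ : 0 ≤ f (w k) - fstar := sub_nonneg.mpr (hlb (w k))
  have hηnn : 0 ≤ η k := by
    rw [hη k]
    apply div_nonneg (le_of_lt hθ)
    nlinarith [mul_nonneg (le_of_lt hH1) hΔ]
  have hsq : (Metric.infDist (w (k + 1)) S) ^ 2 ≤ (Metric.infDist (w k) S) ^ 2 := by
    nlinarith [mul_nonneg (mul_nonneg hηnn (le_of_lt hθ)) hΔ]
  have h2 := Real.sqrt_le_sqrt hsq
  rwa [Real.sqrt_sq Metric.infDist_nonneg, Real.sqrt_sq Metric.infDist_nonneg] at h2
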